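/- Let r ≥ 1 and δ ≥ 1 be integers, and let H be a nonempty r-uniform hypergraph such that every (r−1)-element subset of vertices contained in at least one edge is contained in at least δ edges. Then the (r−1)-shadow satisfies |∂_{r−1}(H)| ≥ C(r + δ − 1, r − 1). -/

import Mathlib

open Finset

/-- The `m`-shadow of a hypergraph: all `m`-element vertex subsets contained in some edge. -/
def hyperShadow {α : Type*} [DecidableEq α] (m : ℕ) (H : Finset (Finset α)) :
    Finset (Finset α) :=
  H.sup fun e => e.powersetCard m

private lemma mem_hyperShadow {α : Type*} [DecidableEq α] {m : ℕ} {H : Finset (Finset α)}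
    {F : Finset α} : F ∈ hyperShadow m H ↔ ∃ e ∈ H, F ⊆ e ∧ F.card = m := by
  simp [hyperShadow, Finset.mem_sup, Finset.mem_powersetCard]

/-- A `(t+1)`-uniform nonempty hypergraph in which every `t`-set contained in an edge is
contained in at least `d` edges has at least `(d+t).choose (t+1)` edges. -/
private lemma edge_bound {α : Type*} [DecidableEq α] :
    ∀ n t d (H : Finset (Finset α)), t + d ≤ n → H.Nonempty →
      (∀ e ∈ H, e.card = t + 1) →
      (∀ U : Finset α, U.card = t → (H.filter fun e => U ⊆ e).Nonempty →
        d ≤ (H.filter fun e => U ⊆ e).card) →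
      (d + t).choose (t + 1) ≤ H.card := by
  intro n
  induction n using Nat.strong_induction_on with
  | _ n IH =>
    intro t d H hn hne hunif hcod
    rcases Nat.eq_zero_or_pos d with rfl | hd
    · simp [Nat.choose_eq_zero_of_lt (Nat.lt_succ_self t)]
    rcases Nat.eq_zero_or_pos t with rfl | ht
    · -- base case: 1-uniform
      have h0 : (H.filter fun e => (∅ : Finset α) ⊆ e) = H :=
        filter_true_of_mem fun e _ => empty_subset e
      have := hcod ∅ rfl (by rw [h0]; exact hne)
      rw [h0] at this
      simpa using this
    · obtain ⟨t', rfl⟩ : ∃ t', t = t' + 1 := ⟨t - 1, (Nat.succ_pred_eq_of_pos ht).symm⟩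
      obtain ⟨d', rfl⟩ : ∃ d', d = d' + 1 := ⟨d - 1, (Nat.succ_pred_eq_of_pos hd).symm⟩
      obtain ⟨e₀, he₀⟩ := hne
      obtain ⟨v, hv⟩ : ∃ v, v ∈ e₀ := by
        have h := hunif e₀ he₀
        have : e₀.Nonempty := card_pos.mp (by omega)
        exact this
      -- the link of v
      set Hv : Finset (Finset α) := (H.filter fun e => v ∈ e).image (fun e => e.erase v)
        with hHvdef
      set H' : Finset (Finset α) := H.filter fun e => ¬ v ∈ e with hH'def
      have herase : ∀ a ∈ (H.filter fun e => v ∈ e), ∀ b ∈ (H.filter fun e => v ∈ e),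
          a.erase v = b.erase v → a = b := by
        intro a ha b hb hab
        rw [mem_filter] at ha hb
        rw [← insert_erase ha.2, hab, insert_erase hb.2]
      have hcardHv : Hv.card = (H.filter fun e => v ∈ e).card :=
        card_image_of_injOn herase
      have hvunif : ∀ e ∈ Hv, e.card = t' + 1 := by
        intro e he
        obtain ⟨a, ha, rfl⟩ := mem_image.mp he
        rw [mem_filter] at ha
        rw [card_erase_of_mem ha.2, hunif a ha.1]
        omega
      have hvne : Hv.Nonempty :=
        ⟨e₀.erase v, mem_image.mpr ⟨e₀, mem_filter.mpr ⟨he₀, hv⟩, rfl⟩⟩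
      have hcodv : ∀ U : Finset α, U.card = t' → (Hv.filter fun e => U ⊆ e).Nonempty →
          d' + 1 ≤ (Hv.filter fun e => U ⊆ e).card := by
        rintro U hU ⟨F, hF⟩
        rw [mem_filter] at hF
        obtain ⟨a, ha, rfl⟩ := mem_image.mp hF.1
        rw [mem_filter] at ha
        have hvU : v ∉ U := fun h => (notMem_erase v a) (hF.2 h)
        have hins : (insert v U).card = t' + 1 := by rw [card_insert_of_notMem hvU, hU]
        have hsub : insert v U ⊆ a := insert_subset ha.2 (hF.2.trans (erase_subset v a))
        have hd2 := hcod (insert v U) hins ⟨a, mem_filter.mpr ⟨ha.1, hsub⟩⟩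
        refine le_trans hd2 (card_le_card_of_injOn (fun e => e.erase v) ?_ ?_)
        · intro e he
          rw [mem_coe, mem_filter] at he ⊢
          have hve : v ∈ e := he.2 (mem_insert_self v U)
          refine ⟨mem_image.mpr ⟨e, mem_filter.mpr ⟨he.1, hve⟩, rfl⟩, ?_⟩
          intro x hx
          exact mem_erase.mpr ⟨fun h => hvU (h ▸ hx), he.2 (mem_insert_of_mem hx)⟩
        · intro a' ha' b' hb' hab
          simp only [coe_filter, Set.mem_setOf_eq, mem_filter] at ha' hb'
          have hva' : v ∈ a' := ha'.2 (mem_insert_self v U)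
          have hvb' : v ∈ b' := hb'.2 (mem_insert_self v U)
          have hab' : a'.erase v = b'.erase v := hab
          rw [← insert_erase hva', hab', insert_erase hvb']
      have hlink : ((d' + 1) + t').choose (t' + 1) ≤ Hv.card :=
        IH (t' + (d' + 1)) (by omega) t' (d' + 1) Hv le_rfl hvne hvunif hcodv
      -- the rest H'
      have hH'unif : ∀ e ∈ H', e.card = (t' + 1) + 1 :=
        fun e he => hunif e (mem_filter.mp he).1
      have hH'cod : ∀ U : Finset α, U.card = t' + 1 → (H'.filter fun e => U ⊆ e).Nonempty →
          d' ≤ (H'.filter fun e => U ⊆ e).card := by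
        rintro U hU ⟨F, hF⟩
        rw [mem_filter] at hF
        have hF1 := hF.1
        rw [mem_filter] at hF1
        have hvU : v ∉ U := fun h => hF1.2 (hF.2 h)
        have hd2 := hcod U hU ⟨F, mem_filter.mpr ⟨hF1.1, hF.2⟩⟩
        have hsub : (H.filter fun e => U ⊆ e) ⊆
            insert (insert v U) (H'.filter fun e => U ⊆ e) := by
          intro e he
          rw [mem_filter] at he
          by_cases hve : v ∈ e
          · have h1 : insert v U ⊆ e := insert_subset hve he.2
            have h2 : e.card ≤ (insert v U).card := by
              rw [card_insert_of_notMem hvU, hU, hunif e he.1]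
            have := (eq_of_subset_of_card_le h1 h2).symm
            exact this ▸ mem_insert_self _ _
          · exact mem_insert_of_mem (mem_filter.mpr ⟨mem_filter.mpr ⟨he.1, hve⟩, he.2⟩)
        have := (card_le_card hsub).trans (card_insert_le _ _)
        omega
      have hH'bound : (d' + (t' + 1)).choose ((t' + 1) + 1) ≤ H'.card := by
        rcases H'.eq_empty_or_nonempty with heq | hne'
        · -- all edges contain v; show d' = 0
          have hall : ∀ e ∈ H, v ∈ e := by
            intro e he
            by_contra hvn
            have : e ∈ H' := mem_filter.mpr ⟨he, hvn⟩
            rw [heq] at this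
            exact absurd this (notMem_empty e)
          have hU : (e₀.erase v).card = t' + 1 := by
            rw [card_erase_of_mem hv, hunif e₀ he₀]
            omega
          have hd2 := hcod (e₀.erase v) hU ⟨e₀, mem_filter.mpr ⟨he₀, erase_subset v e₀⟩⟩
          have hsub : (H.filter fun e => e₀.erase v ⊆ e) ⊆ {insert v (e₀.erase v)} := by
            intro e he
            rw [mem_filter] at he
            have h1 : insert v (e₀.erase v) ⊆ e := insert_subset (hall e he.1) he.2
            have h2 : e.card ≤ (insert v (e₀.erase v)).card := by
              rw [card_insert_of_notMem (notMem_erase v e₀), hU, hunif e he.1]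
            rw [mem_singleton]
            exact (eq_of_subset_of_card_le h1 h2).symm
          have hle1 := (card_le_card hsub).trans_eq (card_singleton _)
          have hd'0 : d' = 0 := by omega
          subst hd'0
          rw [heq]
          simp [Nat.choose_eq_zero_of_lt]
        · exact IH ((t' + 1) + d') (by omega) (t' + 1) d' H' le_rfl hne' hH'unif hH'cod
      have hsplit : (H.filter fun e => v ∈ e).card + H'.card = H.card :=
        card_filter_add_card_filter_not _
      have hpascal : ((d' + 1) + (t' + 1)).choose ((t' + 1) + 1) =
          ((d' + 1) + t').choose (t' + 1) + ((d' + 1) + t').choose ((t' + 1) + 1) := by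
        have h1 : (d' + 1) + (t' + 1) = ((d' + 1) + t') + 1 := by omega
        rw [h1, Nat.choose_succ_succ]
      have hidx : ((d' + 1) + t') = (d' + (t' + 1)) := by omega
      rw [hpascal, hidx]
      have := Nat.add_le_add hlink hH'bound
      rw [hidx] at this
      omega

theorem shadow_lower_bound_of_min_codegree {α : Type*} [DecidableEq α]
    (r δ : ℕ) (hr : 1 ≤ r) (hδ : 1 ≤ δ)
    (H : Finset (Finset α)) (hne : H.Nonempty)
    (hunif : ∀ e ∈ H, e.card = r)
    (hcodeg : ∀ U : Finset α, U.card = r - 1 →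
      (H.filter fun e => U ⊆ e).Nonempty → δ ≤ (H.filter fun e => U ⊆ e).card) :
    (r + δ - 1).choose (r - 1) ≤ (hyperShadow (r - 1) H).card := by
  obtain ⟨e₀, he₀⟩ := hne
  rcases Nat.lt_or_ge r 2 with hr1 | hr2
  · -- r = 1
    have hr' : r = 1 := by omega
    subst hr'
    have hmem : (∅ : Finset α) ∈ hyperShadow 0 H :=
      mem_hyperShadow.mpr ⟨e₀, he₀, empty_subset _, card_empty⟩
    have h1 : 1 ≤ (hyperShadow 0 H).card := card_pos.mpr ⟨∅, hmem⟩
    simpa using h1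
  · obtain ⟨t, rfl⟩ : ∃ t, r = t + 2 := ⟨r - 2, by omega⟩
    have hr1 : t + 2 - 1 = t + 1 := rfl
    set S : Finset (Finset α) := hyperShadow (t + 1) H with hSdef
    have hSunif : ∀ F ∈ S, F.card = t + 1 := by
      intro F hF
      exact (mem_hyperShadow.mp hF).choose_spec.2.2
    have hSne : S.Nonempty := by
      obtain ⟨F, hFsub, hFcard⟩ := Finset.exists_subset_card_eq
        (show t + 1 ≤ e₀.card by rw [hunif e₀ he₀]; omega)
      exact ⟨F, mem_hyperShadow.mpr ⟨e₀, he₀, hFsub, hFcard⟩⟩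
    have hScod : ∀ W : Finset α, W.card = t → (S.filter fun F => W ⊆ F).Nonempty →
        δ + 1 ≤ (S.filter fun F => W ⊆ F).card := by
      rintro W hW ⟨F, hF⟩
      rw [mem_filter] at hF
      obtain ⟨e, heH, hFe, hFcard⟩ := mem_hyperShadow.mp hF.1
      have hWF : W ⊆ F := hF.2
      have hδF := hcodeg F (by rw [hr1]; exact hFcard) ⟨e, mem_filter.mpr ⟨heH, hFe⟩⟩
      -- map e' ↦ (e' \ F) ∪ W
      have himg : ∀ e' ∈ (H.filter fun e' => F ⊆ e'), ((e' \ F) ∪ W) ∈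
          (S.filter fun F' => W ⊆ F') := by
        intro e' he'
        rw [mem_filter] at he'
        have hcard : ((e' \ F) ∪ W).card = t + 1 := by
          have hdisj : Disjoint (e' \ F) W :=
            disjoint_left.mpr fun x hx hxW => (mem_sdiff.mp hx).2 (hWF hxW)
          rw [card_union_of_disjoint hdisj, card_sdiff_of_subset he'.2, hunif e' he'.1, hFcard, hW]
          omega
        refine mem_filter.mpr ⟨mem_hyperShadow.mpr ⟨e', he'.1, ?_, hcard⟩, subset_union_right⟩
        exact union_subset (sdiff_subset) (hWF.trans he'.2)
      have hinj : ∀ a ∈ (H.filter fun e' => F ⊆ e'), ∀ b ∈ (H.filter fun e' => F ⊆ e'),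
          (a \ F) ∪ W = (b \ F) ∪ W → a = b := by
        intro a ha b hb hab
        rw [mem_filter] at ha hb
        have hsd : a \ F = b \ F := by
          apply Subset.antisymm
          · intro x hx
            have hx' := mem_sdiff.mp hx
            have : x ∈ (b \ F) ∪ W := hab ▸ (mem_union_left _ hx)
            rcases mem_union.mp this with h | h
            · exact h
            · exact absurd (hWF h) hx'.2
          · intro x hx
            have hx' := mem_sdiff.mp hx
            have hmem2 : x ∈ (a \ F) ∪ W := by rw [hab]; exact mem_union_left _ hx
            rcases mem_union.mp hmem2 with h | h
            · exact h
            · exact absurd (hWF h) hx'.2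
        calc a = F ∪ (a \ F) := (union_sdiff_of_subset ha.2).symm
          _ = F ∪ (b \ F) := by rw [hsd]
          _ = b := union_sdiff_of_subset hb.2
      have hFnotmem : F ∉ (H.filter fun e' => F ⊆ e').image (fun e' => (e' \ F) ∪ W) := by
        intro hmem
        obtain ⟨e', he', heq⟩ := mem_image.mp hmem
        rw [mem_filter] at he'
        have hcard1 : (e' \ F).card = 1 := by
          rw [card_sdiff_of_subset he'.2, hunif e' he'.1, hFcard]
          omega
        obtain ⟨x, hx⟩ := card_pos.mp (by omega : 0 < (e' \ F).card)
        have hxF : x ∈ F := heq ▸ (mem_union_left _ hx)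
        exact (mem_sdiff.mp hx).2 hxF
      have hsub : insert F ((H.filter fun e' => F ⊆ e').image (fun e' => (e' \ F) ∪ W)) ⊆
          (S.filter fun F' => W ⊆ F') := by
        intro x hx
        rcases mem_insert.mp hx with rfl | hx
        · exact mem_filter.mpr ⟨hF.1, hWF⟩
        · obtain ⟨e', he', rfl⟩ := mem_image.mp hx
          exact himg e' he'
      have hc1 := card_le_card hsub
      rw [card_insert_of_notMem hFnotmem, card_image_of_injOn hinj] at hc1
      omega
    have hmain := edge_bound (t + (δ + 1)) t (δ + 1) S le_rfl hSne hSunif hScod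
    have hidx : t + 2 + δ - 1 = (δ + 1) + t := by omega
    rw [hr1, hidx]
    exact hmain
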